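/- arXiv:2106.11267 — 6 statements merged into one kernel-verified Lean document; each statement's English description precedes it below -/
import Mathlib

section
/- For any matrices B, C, D and any matrix X of appropriate size, the rank of the block matrix [[B, C], [X, D]] is at least rank([B C]) + rank([C; D]) - rank(C). -/
open Matrix FiniteDimensional Module

private lemma aux_map_finrank {K V W : Type*} [Field K] [AddCommGroup V] [Module K V]
    [AddCommGroup W] [Module K W] [FiniteDimensional K V]
    (f : V →ₗ[K] W) (S T : Submodule K V) (hST : S ≤ T) :
    Module.finrank K (T.map f) + Module.finrank K S ≤
      Module.finrank K (S.map f) + Module.finrank K T := by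
  have key : ∀ U : Submodule K V,
      Module.finrank K (U.map f) + Module.finrank K ↥(LinearMap.ker f ⊓ U) =
        Module.finrank K U := by
    intro U
    have h1 := LinearMap.finrank_range_add_finrank_ker (f.domRestrict U)
    rw [LinearMap.range_domRestrict, LinearMap.ker_domRestrict] at h1
    have h2 : Submodule.comap U.subtype (LinearMap.ker f) =
        Submodule.comap U.subtype (LinearMap.ker f ⊓ U) := by
      rw [Submodule.comap_inf, Submodule.comap_subtype_self, inf_top_eq]
    rw [h2, (Submodule.comapSubtypeEquivOfLe (inf_le_right :
      LinearMap.ker f ⊓ U ≤ U)).finrank_eq] at h1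
    exact h1
  have hS := key S
  have hT := key T
  have hmono : Module.finrank K ↥(LinearMap.ker f ⊓ S) ≤
      Module.finrank K ↥(LinearMap.ker f ⊓ T) :=
    Submodule.finrank_mono (inf_le_inf_left _ hST)
  omega

private lemma frobenius_rank {K α β γ δ : Type*} [Field K]
    [Fintype α] [Fintype β] [Fintype γ] [Fintype δ]
    (A : Matrix α β K) (B : Matrix β γ K) (C : Matrix γ δ K) :
    (A * B).rank + (B * C).rank ≤ (A * B * C).rank + B.rank := by
  have h2 : (B * C).mulVecLin = B.mulVecLin ∘ₗ C.mulVecLin := Matrix.mulVecLin_mul B C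
  have e1 : (A * B).rank =
      Module.finrank K ((LinearMap.range B.mulVecLin).map A.mulVecLin) := by
    rw [Matrix.rank, Matrix.mulVecLin_mul, LinearMap.range_comp]
  have e2 : (A * (B * C)).rank =
      Module.finrank K ((LinearMap.range (B * C).mulVecLin).map A.mulVecLin) := by
    rw [Matrix.rank, Matrix.mulVecLin_mul, LinearMap.range_comp]
  have hle : LinearMap.range (B * C).mulVecLin ≤ LinearMap.range B.mulVecLin := by
    rw [h2, LinearMap.range_comp]
    exact (Submodule.map_mono le_top).trans_eq (Submodule.map_top _)
  rw [Matrix.mul_assoc, e1, e2, Matrix.rank, Matrix.rank]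
  exact aux_map_finrank A.mulVecLin _ _ hle

theorem stmt0 (K : Type*) [Field K] (m n p q : ℕ)
    (B : Matrix (Fin m) (Fin p) K) (C : Matrix (Fin m) (Fin q) K)
    (D : Matrix (Fin n) (Fin q) K) (X : Matrix (Fin n) (Fin p) K) :
    (Matrix.fromBlocks B C X D).rank ≥
      (Matrix.fromCols B C).rank + (Matrix.fromRows C D).rank - C.rank := by
  set M := Matrix.fromBlocks B C X D with hM
  set P : Matrix (Fin m) (Fin m ⊕ Fin n) K := Matrix.fromCols 1 0 with hP
  set R : Matrix (Fin p ⊕ Fin q) (Fin q) K := Matrix.fromRows 0 1 with hR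
  have hPM : P * M = Matrix.fromCols B C := by
    rw [hP, hM, Matrix.fromCols_mul_fromBlocks]
    simp
  have hMR : M * R = Matrix.fromRows C D := by
    rw [hR, hM, Matrix.fromBlocks_mul_fromRows]
    simp
  have hPMR : P * M * R = C := by
    rw [hPM, hR, Matrix.fromCols_mul_fromRows]
    simp
  have := frobenius_rank P M R
  rw [hPMR, hPM, hMR] at this
  omega
end

section
/- If C is a square invertible m×m matrix, then for any X, rank([[B, C], [X, D]]) ≥ m, with equality if and only if X = D C⁻¹ B. -/
open Matrix

theorem stmt2 (K : Type*) [Field K] (m n p : ℕ)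
    (B : Matrix (Fin m) (Fin p) K) (C : Matrix (Fin m) (Fin m) K)
    (D : Matrix (Fin n) (Fin m) K) (hC : IsUnit C)
    (X : Matrix (Fin n) (Fin p) K) :
    (Matrix.fromBlocks B C X D).rank ≥ m ∧
      ((Matrix.fromBlocks B C X D).rank = m ↔ X = D * C⁻¹ * B) := by
  set M := Matrix.fromBlocks B C X D with hM
  have hCd : IsUnit C.det := (isUnit_iff_isUnit_det C).mp hC
  have hCinv : C * C⁻¹ = 1 := mul_nonsing_inv C hCd
  have hCinv' : C⁻¹ * C = 1 := nonsing_inv_mul C hCd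
  have hfac : (fromCols (1 : Matrix (Fin m) (Fin m) K) (0 : Matrix (Fin m) (Fin n) K)) * M *
      (fromRows (0 : Matrix (Fin p) (Fin m) K) (1 : Matrix (Fin m) (Fin m) K)) = C := by
    rw [hM, fromCols_mul_fromBlocks, fromCols_mul_fromRows]
    simp
  have hge : M.rank ≥ m := by
    calc m = C.rank := by rw [rank_of_isUnit C hC, Fintype.card_fin]
    _ ≤ M.rank := by
      rw [← hfac]
      exact le_trans (rank_mul_le_left _ _) (rank_mul_le_right _ _)
  refine ⟨hge, ?_, ?_⟩
  · -- rank = m → X = D * C⁻¹ * B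
    intro hr
    set T := M.mulVecLin with hT
    set L := (fromRows C D).mulVecLin with hL
    have hLinj : Function.Injective L := by
      rw [hL, ← LinearMap.ker_eq_bot]
      rw [LinearMap.ker_eq_bot]
      intro y z hyz
      simp only [mulVecLin_apply, fromRows_mulVec] at hyz
      have h1 : C *ᵥ y = C *ᵥ z := funext fun i => congrFun hyz (Sum.inl i)
      exact mulVec_injective_iff_isUnit.mpr hC h1
    have hfin : Module.finrank K (LinearMap.range L) = m := by
      rw [LinearMap.finrank_range_of_inj hLinj]
      simp
    have hsub : LinearMap.range L ≤ LinearMap.range T := by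
      rintro _ ⟨y, rfl⟩
      refine ⟨Sum.elim 0 y, ?_⟩
      simp [hT, hL, hM, fromBlocks_mulVec, Sum.elim_comp_inl, Sum.elim_comp_inr]
    have hrT : Module.finrank K (LinearMap.range T) = m := hr
    have heq : LinearMap.range L = LinearMap.range T :=
      Submodule.eq_of_le_of_finrank_le hsub (by rw [hfin, hrT])
    have key : ∀ x : Fin p → K, X *ᵥ x = (D * C⁻¹ * B) *ᵥ x := by
      intro x
      have hmem : M *ᵥ Sum.elim x 0 ∈ LinearMap.range L := by
        rw [heq]; exact ⟨Sum.elim x 0, rfl⟩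
      obtain ⟨y, hy⟩ := hmem
      simp only [hL, mulVecLin_apply, fromRows_mulVec, hM, fromBlocks_mulVec] at hy
      have h1 : C *ᵥ y = B *ᵥ x := by
        have := funext fun i => congrFun hy (Sum.inl i)
        simpa [Sum.elim_comp_inl, Sum.elim_comp_inr] using this
      have h2 : D *ᵥ y = X *ᵥ x := by
        have := funext fun i => congrFun hy (Sum.inr i)
        simpa [Sum.elim_comp_inl, Sum.elim_comp_inr] using this
      have hy' : y = C⁻¹ *ᵥ (B *ᵥ x) := by
        rw [← h1, mulVec_mulVec, hCinv', one_mulVec]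
      rw [← h2, hy', mulVec_mulVec, mulVec_mulVec, Matrix.mul_assoc]
    ext i j
    have := congrFun (key (Pi.single j 1)) i
    simpa [mulVec_single] using this
  · -- X = D * C⁻¹ * B → rank = m
    intro hX
    refine le_antisymm ?_ hge
    have hfac2 : M = fromRows C D * fromCols (C⁻¹ * B) (1 : Matrix (Fin m) (Fin m) K) := by
      rw [fromRows_mul_fromCols, hM, hX]
      rw [← Matrix.mul_assoc C, hCinv, Matrix.one_mul, Matrix.mul_one, Matrix.mul_one,
        Matrix.mul_assoc]
    calc M.rank ≤ (fromRows C D).rank := by rw [hfac2]; exact rank_mul_le_left _ _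
    _ ≤ Fintype.card (Fin m) := rank_le_card_width _
    _ = m := Fintype.card_fin m
end

section
/- For matrices B, C, D over a field with C having linearly independent rows (full row rank), there exists X such that rank([[B, C], [X, D]]) = rank([B C]) + rank([C; D]) - rank(C). -/
open Matrix

theorem stmt9 (K : Type*) [Field K] (m n p q : ℕ)
    (B : Matrix (Fin m) (Fin p) K) (C : Matrix (Fin m) (Fin q) K)
    (D : Matrix (Fin n) (Fin q) K) (hC : C.rank = m) :
    ∃ X : Matrix (Fin n) (Fin p) K,
      (Matrix.fromBlocks B C X D).rank =
        (Matrix.fromCols B C).rank + (Matrix.fromRows C D).rank - C.rank := by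
  classical
  -- obtain a right inverse G of C
  have hrange : LinearMap.range C.mulVecLin = ⊤ := by
    apply Submodule.eq_top_of_finrank_eq
    rw [show Module.finrank K (LinearMap.range C.mulVecLin) = C.rank from rfl, hC]
    simp [Module.finrank_fintype_fun_eq_card]
  obtain ⟨g, hg⟩ := C.mulVecLin.exists_rightInverse_of_surjective hrange
  set G : Matrix (Fin q) (Fin m) K := LinearMap.toMatrix' g with hGdef
  have hCG : C * G = 1 := by
    have h := congrArg LinearMap.toMatrix' hg
    rwa [LinearMap.toMatrix'_comp, LinearMap.toMatrix'_id, ← Matrix.toLin'_apply',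
      LinearMap.toMatrix'_toLin'] at h
  refine ⟨D * (G * B), ?_⟩
  set R : Matrix (Fin m ⊕ Fin n) (Fin q) K := fromRows C D with hR
  have hblk : fromBlocks B C (D * (G * B)) D = fromCols (R * (G * B)) R := by
    rw [hR, fromRows_mul, ← Matrix.mul_assoc C, ← Matrix.mul_assoc D, hCG, Matrix.one_mul,
      fromCols_fromRows_eq_fromBlocks]
  -- rank of fromColumns (R * N) R equals rank R
  have h1 : (fromCols (R * (G * B)) R).rank = R.rank := by
    apply le_antisymm
    · have : fromCols (R * (G * B)) R = R * fromCols (G * B) 1 := by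
        rw [mul_fromCols, Matrix.mul_one]
      rw [this]
      exact rank_mul_le_left _ _
    · have : R = fromCols (R * (G * B)) R * fromRows (0 : Matrix (Fin p) (Fin q) K) (1 : Matrix (Fin q) (Fin q) K) := by
        rw [fromCols_mul_fromRows, Matrix.mul_zero, Matrix.mul_one, zero_add]
      conv_lhs => rw [this]
      exact rank_mul_le_left _ _
  -- rank of fromColumns B C equals m
  have h2 : (fromCols B C).rank = m := by
    apply le_antisymm
    · simpa using (fromCols B C).rank_le_card_height
    · have hfac : C = fromCols B C * fromRows (0 : Matrix (Fin p) (Fin q) K) (1 : Matrix (Fin q) (Fin q) K) := by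
        rw [fromCols_mul_fromRows, Matrix.mul_zero, Matrix.mul_one, zero_add]
      calc m = C.rank := hC.symm
        _ = (fromCols B C * fromRows (0 : Matrix (Fin p) (Fin q) K) (1 : Matrix (Fin q) (Fin q) K)).rank := by
              rw [← hfac]
        _ ≤ (fromCols B C).rank := rank_mul_le_left _ _
  rw [hblk, h1, h2, hC, Nat.add_sub_cancel_left, hR]
end

section
/- For any matrices B (m×p), C (m×q), D (n×q) over a field, there exists an n×p matrix X such that rank([[B, C], [X, D]]) = rank([B C]) + rank([C; D]) - rank(C); that is, the lower bound for the block 2×2 minimal rank completion problem is always attained. -/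
open Matrix

section Aux

variable {K : Type*} [Field K]

/-- Over a field, every matrix has a generalized ({1}-)inverse. -/
lemma exists_gen_inverse {m q : Type*} [Fintype m] [Fintype q] [DecidableEq m] [DecidableEq q]
    (C : Matrix m q K) : ∃ G : Matrix q m K, C * G * C = C := by
  set f := Matrix.toLin' C with hf
  obtain ⟨P, hP⟩ := Submodule.exists_isCompl (LinearMap.range f)
  obtain ⟨h, hh⟩ := f.rangeRestrict.exists_rightInverse_of_surjective
    (LinearMap.range_eq_top.2 f.surjective_rangeRestrict)
  set π := (LinearMap.range f).linearProjOfIsCompl P hP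
  refine ⟨LinearMap.toMatrix' (h ∘ₗ π), ?_⟩
  apply Matrix.toLin'.injective
  rw [Matrix.toLin'_mul, Matrix.toLin'_mul, Matrix.toLin'_toMatrix']
  refine LinearMap.ext fun x => ?_
  have hmem : f x ∈ LinearMap.range f := LinearMap.mem_range_self f x
  have hπ' : π (f x) = ⟨f x, hmem⟩ :=
    Submodule.linearProjOfIsCompl_apply_left hP ⟨f x, hmem⟩
  have hhv : ∀ v : LinearMap.range f, f (h v) = (v : _) := fun v => by
    have h2 := congrArg (fun g => g v) hh
    simpa [Subtype.ext_iff] using h2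
  simp only [LinearMap.comp_apply, ← hf, hπ', hhv]

/-- If the row spaces of `A` and `B` intersect trivially, ranks add up when stacking. -/
lemma rank_fromRows_add {m₁ m₂ n : Type*} [Fintype m₁] [Fintype m₂] [Fintype n]
    (A : Matrix m₁ n K) (B : Matrix m₂ n K)
    (h : ∀ (x : m₁ → K) (y : m₂ → K), x ᵥ* A = y ᵥ* B → x ᵥ* A = 0) :
    (fromRows A B).rank = A.rank + B.rank := by
  rw [← Matrix.rank_transpose (fromRows A B), Matrix.transpose_fromRows,
    ← Matrix.rank_transpose A, ← Matrix.rank_transpose B]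
  have hrange : LinearMap.range (fromCols Aᵀ Bᵀ).mulVecLin
      = LinearMap.range Aᵀ.mulVecLin ⊔ LinearMap.range Bᵀ.mulVecLin := by
    apply le_antisymm
    · rintro z ⟨v, rfl⟩
      rw [show v = Sum.elim (v ∘ Sum.inl) (v ∘ Sum.inr) by ext (i | i) <;> rfl]
      rw [Matrix.mulVecLin_apply, fromCols_mulVec_sumElim]
      exact Submodule.add_mem_sup ⟨v ∘ Sum.inl, rfl⟩ ⟨v ∘ Sum.inr, rfl⟩
    · rw [sup_le_iff]
      constructor
      · rintro z ⟨v, rfl⟩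
        refine ⟨Sum.elim v 0, ?_⟩
        rw [Matrix.mulVecLin_apply, fromCols_mulVec_sumElim]
        simp [Matrix.mulVec_transpose]
      · rintro z ⟨v, rfl⟩
        refine ⟨Sum.elim 0 v, ?_⟩
        rw [Matrix.mulVecLin_apply, fromCols_mulVec_sumElim]
        simp [Matrix.mulVec_transpose]
  have hdisj : LinearMap.range Aᵀ.mulVecLin ⊓ LinearMap.range Bᵀ.mulVecLin = ⊥ := by
    rw [Submodule.eq_bot_iff]
    rintro z ⟨⟨x, hx⟩, ⟨y, hy⟩⟩
    rw [Matrix.mulVecLin_apply, Matrix.mulVec_transpose] at hx hy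
    have := h x y (hx.trans hy.symm)
    rw [← hx, this]
  have := Submodule.finrank_sup_add_finrank_inf_eq
    (LinearMap.range Aᵀ.mulVecLin) (LinearMap.range Bᵀ.mulVecLin)
  rw [hdisj, finrank_bot, add_zero] at this
  rw [Matrix.rank, Matrix.rank, Matrix.rank, hrange, this]

end Aux

theorem stmt10 (K : Type*) [Field K] (m n p q : ℕ)
    (B : Matrix (Fin m) (Fin p) K) (C : Matrix (Fin m) (Fin q) K)
    (D : Matrix (Fin n) (Fin q) K) :
    ∃ X : Matrix (Fin n) (Fin p) K,
      (Matrix.fromBlocks B C X D).rank =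
        (Matrix.fromCols B C).rank + (Matrix.fromRows C D).rank - C.rank := by
  obtain ⟨G, hG⟩ := exists_gen_inverse C
  set E : Matrix (Fin n) (Fin q) K := D - D * G * C with hE
  have hEGC : E * (G * C) = 0 := by
    have haux : D * G * C * (G * C) = D * G * C := by
      calc D * G * C * (G * C) = D * G * (C * G * C) := by simp only [Matrix.mul_assoc]
        _ = D * G * C := by rw [hG, Matrix.mul_assoc]
    rw [hE, Matrix.sub_mul, haux, ← Matrix.mul_assoc, sub_self]
  -- the key cancellation property
  have hcancel : ∀ (x : Fin m → K) (y : Fin n → K), x ᵥ* C = y ᵥ* E → x ᵥ* C = 0 := by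
    intro x y hxy
    have : x ᵥ* C = (x ᵥ* C) ᵥ* (G * C) := by
      rw [Matrix.vecMul_vecMul, ← Matrix.mul_assoc, hG]
    rw [this, hxy, Matrix.vecMul_vecMul, hEGC, Matrix.vecMul_zero]
  refine ⟨D * G * B, ?_⟩
  -- step 1: row operation
  have hfact : fromBlocks B C (D * G * B) D =
      (fromBlocks (1 : Matrix (Fin m) (Fin m) K) (0 : Matrix (Fin m) (Fin n) K) (D * G) 1) * (fromBlocks B C 0 E) := by
    rw [Matrix.fromBlocks_multiply]
    congr 1 <;> simp [hE, Matrix.mul_assoc]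
  have hdet : IsUnit (fromBlocks (1 : Matrix (Fin m) (Fin m) K) 0 (D * G) 1).det := by
    rw [Matrix.det_fromBlocks_zero₁₂]
    simp
  have h1 : (fromBlocks B C (D * G * B) D).rank = (fromBlocks B C 0 E).rank := by
    rw [hfact, Matrix.rank_mul_eq_right_of_isUnit_det _ _ hdet]
  -- step 2: rank of the block upper triangular matrix
  have h2 : (fromBlocks B C 0 E).rank = (fromCols B C).rank + E.rank := by
    rw [← Matrix.fromRows_fromCols_eq_fromBlocks]
    have hzero : (fromCols (0 : Matrix (Fin n) (Fin p) K) E).rank = E.rank := by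
      rw [← Matrix.rank_transpose, Matrix.transpose_fromCols, ← Matrix.rank_transpose E]
      have : ∀ (x : Fin p → K) (y : Fin q → K), x ᵥ* (0 : Matrix (Fin n) (Fin p) K)ᵀ
          = y ᵥ* Eᵀ → x ᵥ* (0 : Matrix (Fin n) (Fin p) K)ᵀ = 0 := by
        intro x y _; simp
      have := rank_fromRows_add (0 : Matrix (Fin n) (Fin p) K)ᵀ Eᵀ this
      rw [this]
      simp
    rw [rank_fromRows_add _ _ ?_, hzero]
    intro x y hxy
    rw [Matrix.vecMul_fromCols, Matrix.vecMul_fromCols] at hxy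
    have hB : x ᵥ* B = 0 := funext fun j => by simpa using congrFun hxy (Sum.inl j)
    have hC : x ᵥ* C = y ᵥ* E := funext fun j => by simpa using congrFun hxy (Sum.inr j)
    have hC0 : x ᵥ* C = 0 := hcancel x y hC
    rw [Matrix.vecMul_fromCols, hB, hC0]
    funext j
    cases j <;> simp
  -- step 3: rank of fromRows C D
  have h3 : (fromRows C D).rank = C.rank + E.rank := by
    have hfact2 : fromRows C D =
        (fromBlocks (1 : Matrix (Fin m) (Fin m) K) (0 : Matrix (Fin m) (Fin n) K) (D * G) 1) * (fromRows C E) := by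
      rw [Matrix.fromBlocks_mul_fromRows]
      congr 1 <;> simp [hE, Matrix.mul_assoc]
    rw [hfact2, Matrix.rank_mul_eq_right_of_isUnit_det _ _ hdet,
      rank_fromRows_add C E hcancel]
  have hle : C.rank ≤ (fromRows C D).rank := by omega
  omega
end

section
/- For any matrices B, C, D over a field, the minimum over all X of rank([[B, C], [X, D]]) equals rank([B C]) + rank([C; D]) - rank(C). -/
open Matrix LinearMap Submodule Module

section aux
variable {K : Type*} [Field K] {E F : Type*} [AddCommGroup E] [Module K E]
  [AddCommGroup F] [Module K F] [FiniteDimensional K E]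

lemma finrank_eq_map_add_inf_ker (π : E →ₗ[K] F) (S : Submodule K E) :
    Module.finrank K S =
      Module.finrank K (S.map π) + Module.finrank K (S ⊓ LinearMap.ker π : Submodule K E) := by
  have h := (π.comp S.subtype).finrank_range_add_finrank_ker
  have h1 : LinearMap.range (π.comp S.subtype) = S.map π := by
    rw [LinearMap.range_comp, Submodule.range_subtype]
  have h2 : Module.finrank K (LinearMap.ker (π.comp S.subtype)) =
      Module.finrank K (S ⊓ LinearMap.ker π : Submodule K E) := by
    rw [LinearMap.ker_comp]
    rw [(S.equivSubtypeMap (Submodule.comap S.subtype (LinearMap.ker π))).finrank_eq,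
      Submodule.map_comap_subtype]
  rw [h1, h2] at h
  omega

end aux

theorem stmt11 (K : Type*) [Field K] (m n p q : ℕ)
    (B : Matrix (Fin m) (Fin p) K) (C : Matrix (Fin m) (Fin q) K)
    (D : Matrix (Fin n) (Fin q) K) :
    IsLeast {r : ℕ | ∃ X : Matrix (Fin n) (Fin p) K, (Matrix.fromBlocks B C X D).rank = r}
      ((Matrix.fromCols B C).rank + (Matrix.fromRows C D).rank - C.rank) := by
  classical
  set π : ((Fin m ⊕ Fin n) → K) →ₗ[K] (Fin m → K) := LinearMap.funLeft K K Sum.inl with hπ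
  -- π applied to fromBlocks-product
  have hπapp : ∀ v : (Fin m ⊕ Fin n) → K, ∀ i, π v i = v (Sum.inl i) := fun v i => rfl
  have hmapV : ∀ X : Matrix (Fin n) (Fin p) K,
      (LinearMap.range (fromBlocks B C X D).mulVecLin).map π =
        LinearMap.range (fromCols B C).mulVecLin := by
    intro X
    rw [← LinearMap.range_comp]
    congr 1
  have hmapW :
      (LinearMap.range (fromRows C D).mulVecLin).map π = LinearMap.range C.mulVecLin := by
    rw [← LinearMap.range_comp]
    congr 1
  have hWleV : ∀ X : Matrix (Fin n) (Fin p) K,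
      LinearMap.range (fromRows C D).mulVecLin ≤
        LinearMap.range (fromBlocks B C X D).mulVecLin := by
    rintro X v ⟨y, rfl⟩
    refine ⟨Sum.elim 0 y, ?_⟩
    simp [Matrix.mulVecLin_apply, Matrix.fromBlocks_mulVec, Matrix.fromRows_mulVec]
  have hrkV : ∀ X : Matrix (Fin n) (Fin p) K,
      (fromBlocks B C X D).rank = (fromCols B C).rank +
        finrank K (LinearMap.range (fromBlocks B C X D).mulVecLin ⊓ LinearMap.ker π :
          Submodule K ((Fin m ⊕ Fin n) → K)) := by
    intro X
    simp only [Matrix.rank]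
    rw [finrank_eq_map_add_inf_ker π, hmapV X]
  have hrkW : (fromRows C D).rank = C.rank +
      finrank K (LinearMap.range (fromRows C D).mulVecLin ⊓ LinearMap.ker π :
        Submodule K ((Fin m ⊕ Fin n) → K)) := by
    simp only [Matrix.rank]
    rw [finrank_eq_map_add_inf_ker π, hmapW]
  constructor
  · -- membership : construct the minimizing X
    obtain ⟨F, hF⟩ := (LinearMap.range C.mulVecLin).exists_isCompl
    obtain ⟨s, hs⟩ := C.mulVecLin.rangeRestrict.exists_rightInverse_of_surjective
      (LinearMap.range_eq_top.2 C.mulVecLin.surjective_rangeRestrict)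
    set proj := Submodule.linearProjOfIsCompl _ F hF with hproj
    set u : (Fin p → K) →ₗ[K] (Fin q → K) := s ∘ₗ proj ∘ₗ B.mulVecLin with hu
    have hCu : ∀ x : Fin p → K,
        C.mulVecLin (u x) = (proj (B.mulVecLin x) : Fin m → K) := by
      intro x
      have h1 : C.mulVecLin.rangeRestrict (s (proj (B.mulVecLin x))) =
          proj (B.mulVecLin x) := by
        have := congrArg (fun f => f (proj (B.mulVecLin x))) hs
        simpa only [LinearMap.comp_apply, LinearMap.id_apply] using this
      have h2 : (C.mulVecLin.rangeRestrict (s (proj (B.mulVecLin x))) : Fin m → K) =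
          C.mulVecLin (s (proj (B.mulVecLin x))) := rfl
      rw [hu]
      simp only [LinearMap.comp_apply]
      rw [← h2, h1]
    have hFmem : ∀ x : Fin p → K, B.mulVecLin x - C.mulVecLin (u x) ∈ F := by
      intro x
      rw [hCu, ← Submodule.linearProjOfIsCompl_apply_eq_zero_iff hF]
      rw [map_sub]
      rw [hproj, Submodule.linearProjOfIsCompl_apply_left hF]
      exact sub_self _
    set X := D * LinearMap.toMatrix' u with hX
    have hXmul : ∀ x : Fin p → K, X.mulVec x = D.mulVec (u x) := by
      intro x
      rw [hX, ← Matrix.mulVec_mulVec]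
      have : (LinearMap.toMatrix' u).mulVec x = Matrix.toLin' (LinearMap.toMatrix' u) x :=
        (Matrix.toLin'_apply _ _).symm
      rw [this, Matrix.toLin'_toMatrix']
    have hinf : LinearMap.range (fromBlocks B C X D).mulVecLin ⊓ LinearMap.ker π =
        LinearMap.range (fromRows C D).mulVecLin ⊓ LinearMap.ker π := by
      apply le_antisymm
      · rintro v hv
        obtain ⟨hv1, hv2⟩ := Submodule.mem_inf.mp hv
        obtain ⟨z, rfl⟩ := hv1
        set x := z ∘ Sum.inl with hx
        set y := z ∘ Sum.inr with hy
        have hz : z = Sum.elim x y := (Sum.elim_comp_inl_inr z).symm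
        have hval : ∀ w : Fin m ⊕ Fin n, (fromBlocks B C X D).mulVecLin z w =
            Sum.elim (B.mulVec x + C.mulVec y) (X.mulVec x + D.mulVec y) w := by
          intro w
          rw [Matrix.mulVecLin_apply, hz, Matrix.fromBlocks_mulVec]
          simp only [Sum.elim_comp_inl, Sum.elim_comp_inr]
        have htop : B.mulVec x + C.mulVec y = 0 := by
          funext i
          have h0 := congrFun (LinearMap.mem_ker.mp hv2) i
          rw [hπapp] at h0
          have := hval (Sum.inl i)
          simp only [Sum.elim_inl] at this
          rw [this] at h0
          simpa using h0
        have h1 : B.mulVecLin x - C.mulVecLin (u x) ∈ LinearMap.range C.mulVecLin := by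
          have hBx : B.mulVecLin x = -C.mulVecLin (u x + y) + C.mulVecLin (u x) := by
            simp only [Matrix.mulVecLin_apply]
            have : C.mulVec (u x + y) = C.mulVec (u x) + C.mulVec y := by
              rw [Matrix.mulVec_add]
            rw [this]
            have := eq_neg_of_add_eq_zero_left htop
            rw [this]
            abel
          rw [hBx]
          exact Submodule.sub_mem _
            (Submodule.add_mem _ (Submodule.neg_mem _ ⟨u x + y, rfl⟩) ⟨u x, rfl⟩)
            ⟨u x, rfl⟩
        have h2 : B.mulVecLin x - C.mulVecLin (u x) = 0 :=
          Submodule.disjoint_def.mp hF.disjoint _ h1 (hFmem x)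
        have hBeq : B.mulVec x = C.mulVec (u x) := by
          have := sub_eq_zero.mp h2
          simpa [Matrix.mulVecLin_apply] using this
        have hCuy : C.mulVec (u x + y) = 0 := by
          rw [Matrix.mulVec_add, ← hBeq, htop]
        refine Submodule.mem_inf.mpr ⟨⟨u x + y, ?_⟩, hv2⟩
        funext w
        rw [Matrix.mulVecLin_apply, Matrix.fromRows_mulVec]
        cases w with
        | inl i =>
          have h0 := congrFun (LinearMap.mem_ker.mp hv2) i
          rw [hπapp] at h0
          simp only [Sum.elim_inl, hCuy]
          rw [h0]
        | inr i =>
          have := hval (Sum.inr i)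
          simp only [Sum.elim_inr] at this
          rw [this]
          simp [hXmul, Matrix.mulVec_add]
      · exact inf_le_inf_right _ (hWleV X)
    refine ⟨X, ?_⟩
    have e1 := hrkV X
    rw [hinf] at e1
    omega
  · rintro r ⟨X, rfl⟩
    have e1 := hrkV X
    have e2 := hrkW
    have e3 : finrank K (LinearMap.range (fromRows C D).mulVecLin ⊓ LinearMap.ker π :
          Submodule K ((Fin m ⊕ Fin n) → K)) ≤
        finrank K (LinearMap.range (fromBlocks B C X D).mulVecLin ⊓ LinearMap.ker π :
          Submodule K ((Fin m ⊕ Fin n) → K)) :=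
      Submodule.finrank_mono (inf_le_inf_right _ (hWleV X))
    omega
end

section
/- Given matrices A11 (m1×p), A21 (m2×p), A22 (m2×q), An2 (n×q), there exists an n×p matrix X that simultaneously minimizes rank([A11; A21; X]) and rank([[A21, A22], [X, An2]]) over all choices of X. -/
open Matrix Submodule Module

section aux

variable {K : Type*} [Field K]

lemma rank_eq_finrank_span_rows {m n : Type*} [Fintype m] [Fintype n]
    (A : Matrix m n K) :
    A.rank = finrank K (span K (Set.range A)) := by
  exact Matrix.rank_eq_finrank_span_row A

end aux

set_option synthInstance.maxHeartbeats 1000000 in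
set_option maxHeartbeats 1000000 in
theorem stmt12 (K : Type*) [Field K] (m1 m2 n p q : ℕ)
    (A11 : Matrix (Fin m1) (Fin p) K) (A21 : Matrix (Fin m2) (Fin p) K)
    (A22 : Matrix (Fin m2) (Fin q) K) (An2 : Matrix (Fin n) (Fin q) K) :
    ∃ X : Matrix (Fin n) (Fin p) K,
      (∀ Y : Matrix (Fin n) (Fin p) K,
        (Matrix.fromRows A11 (Matrix.fromRows A21 X)).rank ≤
          (Matrix.fromRows A11 (Matrix.fromRows A21 Y)).rank) ∧
      (∀ Y : Matrix (Fin n) (Fin p) K,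
        (Matrix.fromBlocks A21 A22 X An2).rank ≤
          (Matrix.fromBlocks A21 A22 Y An2).rank) := by
  classical
  -- subspaces of K^q
  set V : Submodule K (Fin q → K) := span K (Set.range A22) with hV
  set W : Submodule K (Fin q → K) := V ⊔ span K (Set.range An2) with hW
  obtain ⟨U', hU'⟩ := V.exists_isCompl
  set U : Submodule K (Fin q → K) := U' ⊓ W with hU
  have hUW : U ≤ W := inf_le_right
  have hVU_disj : V ⊓ U = ⊥ := by
    rw [eq_bot_iff]
    exact le_trans (inf_le_inf_left V inf_le_left) hU'.disjoint.le_bot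
  -- decompose rows of An2
  have hdecomp : ∀ i, ∃ c : Fin m2 → K, ∃ u ∈ U, An2 i = c ᵥ* A22 + u := by
    intro i
    have hiW : An2 i ∈ W := le_sup_right (α := Submodule K (Fin q → K))
      (subset_span (Set.mem_range_self i))
    have : An2 i ∈ V ⊔ U' := by rw [hU'.sup_eq_top]; trivial
    obtain ⟨v, hv, u, hu, hvu⟩ := mem_sup.mp this
    have hvW : v ∈ W := le_sup_left (α := Submodule K (Fin q → K)) hv
    have huW : u ∈ W := by
      have : u = An2 i - v := by rw [← hvu]; ring
      rw [this]; exact W.sub_mem hiW hvW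
    rw [hV, show Set.range A22 = Set.range A22.row from rfl, ← range_vecMulLinear] at hv
    obtain ⟨c, hc⟩ := hv
    exact ⟨c, u, ⟨hu, huW⟩, by rw [← hvu, ← hc]; rfl⟩
  choose c u hu hAn2 using hdecomp
  refine ⟨Matrix.of (fun i => c i ᵥ* A21), ?_, ?_⟩
  · -- first block
    intro Y
    rw [rank_eq_finrank_span_rows, rank_eq_finrank_span_rows]
    apply Submodule.finrank_mono
    rw [Submodule.span_le]
    rintro r ⟨i, rfl⟩
    match i with
    | Sum.inl i =>
        exact subset_span ⟨Sum.inl i, rfl⟩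
    | Sum.inr (Sum.inl i) =>
        exact subset_span ⟨Sum.inr (Sum.inl i), rfl⟩
    | Sum.inr (Sum.inr i) =>
        show (Matrix.of (fun i => c i ᵥ* A21)) i ∈ _
        have : c i ᵥ* A21 ∈ span K (Set.range A21) := by
          rw [show Set.range A21 = Set.range A21.row from rfl, ← range_vecMulLinear]; exact ⟨c i, rfl⟩
        refine Submodule.span_le.mpr ?_ this
        rintro r ⟨j, rfl⟩
        exact subset_span ⟨Sum.inr (Sum.inl j), rfl⟩
  · -- second block
    intro Y
    rw [rank_eq_finrank_span_rows, rank_eq_finrank_span_rows]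
    set T : Submodule K (Fin p ⊕ Fin q → K) :=
      span K (Set.range (Matrix.fromCols A21 A22)) with hT
    set ι : (Fin q → K) →ₗ[K] (Fin p ⊕ Fin q → K) :=
      { toFun := fun f => Sum.elim 0 f,
        map_add' := by intros f g; funext j; cases j <;> simp
        map_smul' := by intros a f; funext j; cases j <;> simp } with hι
    -- upper bound : rank with our X is at most finrank T + finrank U
    have hup : span K (Set.range (Matrix.fromBlocks A21 A22
        (Matrix.of fun i => c i ᵥ* A21) An2)) ≤ T ⊔ U.map ι := by
      rw [Submodule.span_le]
      rintro r ⟨i, rfl⟩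
      match i with
      | Sum.inl i =>
          apply le_sup_left (α := Submodule K (Fin p ⊕ Fin q → K))
          have : (Matrix.fromBlocks A21 A22 (Matrix.of fun i => c i ᵥ* A21) An2) (Sum.inl i)
              = Matrix.fromCols A21 A22 i := by
            funext j; cases j <;> rfl
          rw [this]
          exact subset_span ⟨i, rfl⟩
      | Sum.inr i =>
          have : (Matrix.fromBlocks A21 A22 (Matrix.of fun i => c i ᵥ* A21) An2) (Sum.inr i)
              = (c i ᵥ* Matrix.fromCols A21 A22) + ι (u i) := by
            funext j
            cases j with
            | inl jp =>
                simp [Matrix.vecMul_fromCols, hι, Sum.elim_inl, Pi.zero_apply]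
            | inr jq =>
                simp [Matrix.vecMul_fromCols, hι]
                rw [hAn2 i]; rfl
          rw [this]
          apply Submodule.add_mem
          · apply le_sup_left (α := Submodule K (Fin p ⊕ Fin q → K))
            rw [hT, show Set.range (Matrix.fromCols A21 A22) = Set.range (Matrix.fromCols A21 A22).row from rfl, ← range_vecMulLinear]
            exact ⟨c i, rfl⟩
          · exact le_sup_right (α := Submodule K (Fin p ⊕ Fin q → K))
              (Submodule.mem_map_of_mem (hu i))
    have h1 : finrank K (span K (Set.range (Matrix.fromBlocks A21 A22
        (Matrix.of fun i => c i ᵥ* A21) An2))) ≤ finrank K T + finrank K U := by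
      refine le_trans (Submodule.finrank_mono hup) ?_
      refine le_trans (Submodule.finrank_add_le_finrank_add_finrank T (U.map ι)) ?_
      exact Nat.add_le_add_left (Submodule.finrank_map_le ι U) _
    -- lower bound for arbitrary Y
    set S : Submodule K (Fin p ⊕ Fin q → K) :=
      span K (Set.range (Matrix.fromBlocks A21 A22 Y An2)) with hS
    set π : (Fin p ⊕ Fin q → K) →ₗ[K] (Fin q → K) := LinearMap.funLeft K K Sum.inr with hπ
    set φ : S →ₗ[K] ((Fin q → K) ⧸ V) := V.mkQ ∘ₗ π ∘ₗ S.subtype with hφ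
    have hrn := LinearMap.finrank_range_add_finrank_ker φ
    have hTS : T ≤ S := by
      rw [hT, Submodule.span_le]
      rintro r ⟨i, rfl⟩
      have : Matrix.fromCols A21 A22 i
          = (Matrix.fromBlocks A21 A22 Y An2) (Sum.inl i) := by
        funext j; cases j <;> rfl
      rw [this]
      exact subset_span ⟨Sum.inl i, rfl⟩
    have hTker : finrank K T ≤ finrank K (LinearMap.ker φ) := by
      have hcomap : T.comap S.subtype ≤ LinearMap.ker φ := by
        rintro ⟨x, hxS⟩ hxT
        replace hxT : x ∈ T := hxT
        have hπT : π x ∈ V := by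
          have : T ≤ V.comap π := by
            rw [hT, Submodule.span_le]
            rintro r ⟨i, rfl⟩
            have heq : π (Matrix.fromCols A21 A22 i) = A22 i := by
              funext j; rfl
            have hmem : π (Matrix.fromCols A21 A22 i) ∈ V := by
              rw [heq]; exact subset_span ⟨i, rfl⟩
            exact hmem
          exact this hxT
        simp only [LinearMap.mem_ker, hφ, LinearMap.comp_apply, Submodule.subtype_apply]
        rwa [Submodule.mkQ_apply, Submodule.Quotient.mk_eq_zero]
      refine le_trans (le_of_eq ?_) (Submodule.finrank_mono hcomap)
      exact (Submodule.comapSubtypeEquivOfLe hTS).finrank_eq.symm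
    have hUrange : finrank K U ≤ finrank K (LinearMap.range φ) := by
      have hker : LinearMap.ker (V.mkQ.domRestrict U) = ⊥ := by
        rw [eq_bot_iff]
        rintro ⟨x, hxU⟩ hx
        rw [LinearMap.ker_domRestrict] at hx
        simp only [Submodule.mem_comap, Submodule.subtype_apply, Submodule.ker_mkQ] at hx
        have : x ∈ V ⊓ U := ⟨hx, hxU⟩
        rw [hVU_disj] at this
        have hx0 : x = 0 := (Submodule.mem_bot K).mp this
        simp [Submodule.mem_bot, Subtype.ext_iff, hx0]
      have hUeq : finrank K U = finrank K (U.map V.mkQ) := by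
        have := LinearMap.finrank_range_add_finrank_ker (V.mkQ.domRestrict U)
        rw [hker, finrank_bot, add_zero, LinearMap.range_domRestrict] at this
        exact this.symm
      have hmaple : U.map V.mkQ ≤ LinearMap.range φ := by
        have hWle : W.map V.mkQ ≤ LinearMap.range φ := by
          rw [hW, Submodule.map_sup]
          apply sup_le
          · intro y hy
            obtain ⟨x, hxV, rfl⟩ := hy
            have : V.mkQ x = 0 := by
              rw [Submodule.mkQ_apply, Submodule.Quotient.mk_eq_zero]; exact hxV
            rw [this]; exact Submodule.zero_mem _
          · rw [Submodule.map_span, Submodule.span_le]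
            rintro y ⟨z, ⟨i, rfl⟩, rfl⟩
            have hrow : (Matrix.fromBlocks A21 A22 Y An2) (Sum.inr i) ∈ S :=
              subset_span ⟨Sum.inr i, rfl⟩
            refine ⟨⟨_, hrow⟩, ?_⟩
            rfl
        exact le_trans (Submodule.map_mono hUW) hWle
      rw [hUeq]
      exact Submodule.finrank_mono hmaple
    calc finrank K (span K (Set.range (Matrix.fromBlocks A21 A22
            (Matrix.of fun i => c i ᵥ* A21) An2)))
        ≤ finrank K T + finrank K U := h1
      _ ≤ finrank K (LinearMap.ker φ) + finrank K (LinearMap.range φ) :=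
          Nat.add_le_add hTker hUrange
      _ = finrank K S := by rw [Nat.add_comm]; exact hrn
end
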